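/- Let k ≥ 2 be an integer, λ > 0, and let α∘, α• be real numbers with α∘ − α• > 2. Let φ : ℝ → ℝ be a C² function with φ(t) = 1 for t ≤ 0, φ(t) = 0 for t ≥ 1, and 0 ≤ φ ≤ 1. Then there exists D₀ ≥ 1 such that for every D ≥ D₀ and every ρ > 0, writing φ_D(ρ) := φ(ρ − D), one has λ·ρ^{−2}·(ρ^{α∘} + φ_D(ρ)·ρ^{α•}) − (φ_D''(ρ) + ((k−1)/ρ)·φ_D'(ρ))·ρ^{α•} − 2·α•·φ_D'(ρ)·ρ^{α•−1} > 0. -/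

import Mathlib

open Real Set

/-- Positivity estimate (2.13) in Step 1 of Proposition 2.2 (Basic Deformations): the
transition from `Ψ∘` to `Ψ∘ + Ψ•` via the cutoff `φ_D(ρ) = φ(ρ − D)`, performed at a
sufficiently large radius `D`, keeps the scalar curvature expression positive. Here
`ρ ^ α` is the real power `Real.rpow`. -/
theorem transition_outward_positive (k : ℕ) (hk : 2 ≤ k) (lam : ℝ) (hlam : 0 < lam)
    (αo αb : ℝ) (hab : 2 < αo - αb)
    (φ : ℝ → ℝ) (hφ : ContDiff ℝ 2 φ)
    (hφ0 : ∀ t : ℝ, t ≤ 0 → φ t = 1) (hφ1 : ∀ t : ℝ, 1 ≤ t → φ t = 0)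
    (hφrange : ∀ t : ℝ, 0 ≤ φ t ∧ φ t ≤ 1) :
    ∃ D₀ : ℝ, 1 ≤ D₀ ∧ ∀ D : ℝ, D₀ ≤ D → ∀ ρ : ℝ, 0 < ρ →
      0 < lam * ρ ^ (-2 : ℝ) * (ρ ^ αo + φ (ρ - D) * ρ ^ αb) -
          (deriv (deriv φ) (ρ - D) + ((k : ℝ) - 1) / ρ * deriv φ (ρ - D)) * ρ ^ αb -
          2 * αb * deriv φ (ρ - D) * ρ ^ (αb - 1) := by
  have h21 : (2 : WithTop ℕ∞) = 1 + 1 := by norm_num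
  have hC1 : ContDiff ℝ 1 (deriv φ) := (contDiff_succ_iff_deriv.mp (h21 ▸ hφ)).2.2
  have hd1 : Continuous (deriv φ) := hφ.continuous_deriv (by norm_num)
  have hd2 : Continuous (deriv (deriv φ)) := hC1.continuous_deriv le_rfl
  -- deriv φ vanishes strictly outside (0,1)
  have hdlt : ∀ t : ℝ, t < 0 → deriv φ t = 0 := by
    intro t ht
    have he : φ =ᶠ[nhds t] fun _ => (1 : ℝ) := by
      filter_upwards [Iio_mem_nhds ht] with x hx using hφ0 x hx.le
    rw [he.deriv_eq, deriv_const]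
  have hdgt : ∀ t : ℝ, 1 < t → deriv φ t = 0 := by
    intro t ht
    have he : φ =ᶠ[nhds t] fun _ => (0 : ℝ) := by
      filter_upwards [Ioi_mem_nhds ht] with x hx using hφ1 x hx.le
    rw [he.deriv_eq, deriv_const]
  -- extend to closed half-lines by continuity
  have hdle : ∀ t : ℝ, t ≤ 0 → deriv φ t = 0 := by
    intro t ht
    have := (Set.EqOn.closure (s := Iio (0:ℝ)) (g := fun _ => (0:ℝ))
      (fun x hx => hdlt x hx) hd1 continuous_const)
    simpa using this (by simpa [closure_Iio] using ht)
  have hdge : ∀ t : ℝ, 1 ≤ t → deriv φ t = 0 := by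
    intro t ht
    have := (Set.EqOn.closure (s := Ioi (1:ℝ)) (g := fun _ => (0:ℝ))
      (fun x hx => hdgt x hx) hd1 continuous_const)
    simpa using this (by simpa [closure_Ioi] using ht)
  have hddle : ∀ t : ℝ, t ≤ 0 → deriv (deriv φ) t = 0 := by
    have hlt : ∀ t : ℝ, t < 0 → deriv (deriv φ) t = 0 := by
      intro t ht
      have he : deriv φ =ᶠ[nhds t] fun _ => (0 : ℝ) := by
        filter_upwards [Iio_mem_nhds ht] with x hx using hdlt x hx
      rw [he.deriv_eq, deriv_const]
    intro t ht
    have := (Set.EqOn.closure (s := Iio (0:ℝ)) (g := fun _ => (0:ℝ))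
      (fun x hx => hlt x hx) hd2 continuous_const)
    simpa using this (by simpa [closure_Iio] using ht)
  have hddge : ∀ t : ℝ, 1 ≤ t → deriv (deriv φ) t = 0 := by
    have hgt : ∀ t : ℝ, 1 < t → deriv (deriv φ) t = 0 := by
      intro t ht
      have he : deriv φ =ᶠ[nhds t] fun _ => (0 : ℝ) := by
        filter_upwards [Ioi_mem_nhds ht] with x hx using hdgt x hx
      rw [he.deriv_eq, deriv_const]
    intro t ht
    have := (Set.EqOn.closure (s := Ioi (1:ℝ)) (g := fun _ => (0:ℝ))
      (fun x hx => hgt x hx) hd2 continuous_const)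
    simpa using this (by simpa [closure_Ioi] using ht)
  -- global bound M
  obtain ⟨M1, hM1⟩ := (isCompact_Icc (a := (0:ℝ)) (b := 1)).exists_bound_of_continuousOn
    hd1.continuousOn
  obtain ⟨M2, hM2⟩ := (isCompact_Icc (a := (0:ℝ)) (b := 1)).exists_bound_of_continuousOn
    hd2.continuousOn
  set M : ℝ := max 0 (max M1 M2) with hMdef
  have hM0 : 0 ≤ M := le_max_left _ _
  have hbd1 : ∀ t : ℝ, |deriv φ t| ≤ M := by
    intro t
    rcases le_or_gt t 0 with h | h
    · simp [hdle t h, hM0]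
    rcases le_or_gt 1 t with h' | h'
    · simp [hdge t h', hM0]
    · exact le_trans (by simpa using hM1 t ⟨h.le, h'.le⟩)
        (le_trans (le_max_left M1 M2) (le_max_right _ _))
  have hbd2 : ∀ t : ℝ, |deriv (deriv φ) t| ≤ M := by
    intro t
    rcases le_or_gt t 0 with h | h
    · simp [hddle t h, hM0]
    rcases le_or_gt 1 t with h' | h'
    · simp [hddge t h', hM0]
    · exact le_trans (by simpa using hM2 t ⟨h.le, h'.le⟩)
        (le_trans (le_max_right M1 M2) (le_max_right _ _))
  -- constants
  set ε : ℝ := αo - αb - 2 with hεdef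
  have hε : 0 < ε := by simp [hεdef]; linarith
  set C : ℝ := (k : ℝ) * M + 2 * |αb| * M with hCdef
  have hC0 : 0 ≤ C := by
    have : (0:ℝ) ≤ (k:ℝ) := Nat.cast_nonneg k
    positivity
  refine ⟨max 1 (((C + 1) / lam) ^ (1 / ε)), le_max_left _ _, ?_⟩
  intro D hD ρ hρ
  have hρpow : ∀ a : ℝ, 0 < ρ ^ a := fun a => rpow_pos_of_pos hρ a
  set t : ℝ := ρ - D with htdef
  rcases le_or_gt t 0 with hcase | hcase
  · -- derivatives vanish
    rw [hdle t hcase, hddle t hcase]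
    have h1 : 0 ≤ φ t * ρ ^ αb := mul_nonneg (hφrange t).1 (hρpow αb).le
    have h2 : 0 < lam * ρ ^ (-2:ℝ) * (ρ ^ αo + φ t * ρ ^ αb) := by
      apply mul_pos (mul_pos hlam (hρpow _))
      have := hρpow αo; linarith
    simpa using h2
  rcases le_or_gt 1 t with hcase' | hcase'
  · rw [hdge t hcase', hddge t hcase']
    have h1 : 0 ≤ φ t * ρ ^ αb := mul_nonneg (hφrange t).1 (hρpow αb).le
    have h2 : 0 < lam * ρ ^ (-2:ℝ) * (ρ ^ αo + φ t * ρ ^ αb) := by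
      apply mul_pos (mul_pos hlam (hρpow _))
      have := hρpow αo; linarith
    simpa using h2
  · -- transition region: 0 < t < 1, so ρ > D ≥ D₀ ≥ 1
    have hDD : max 1 (((C + 1) / lam) ^ (1 / ε)) ≤ ρ := by
      have : D < ρ := by simp [htdef] at hcase; linarith
      linarith
    have hρ1 : 1 ≤ ρ := le_trans (le_max_left _ _) hDD
    -- main term lower bound
    have hmain : lam * ρ ^ (αo - 2) ≤ lam * ρ ^ (-2:ℝ) * (ρ ^ αo + φ t * ρ ^ αb) := by
      have h1 : 0 ≤ φ t * ρ ^ αb := mul_nonneg (hφrange t).1 (hρpow αb).le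
      have h2 : ρ ^ (αo - 2) = ρ ^ (-2:ℝ) * ρ ^ αo := by
        rw [← Real.rpow_add hρ]; ring_nf
      rw [h2]
      have := mul_pos hlam (hρpow (-2:ℝ))
      nlinarith [hρpow (-2:ℝ)]
    -- error bounds
    have hE1 : (deriv (deriv φ) t + ((k : ℝ) - 1) / ρ * deriv φ t) * ρ ^ αb
        ≤ ((k:ℝ) * M) * ρ ^ αb := by
      apply mul_le_mul_of_nonneg_right _ (hρpow αb).le
      have hk1 : (0:ℝ) ≤ (k:ℝ) - 1 := by
        have : (2:ℝ) ≤ (k:ℝ) := by exact_mod_cast hk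
        linarith
      have hfrac : ((k:ℝ) - 1) / ρ ≤ (k:ℝ) - 1 := by
        rw [div_le_iff₀ hρ]; nlinarith
      have hfrac0 : 0 ≤ ((k:ℝ) - 1) / ρ := div_nonneg hk1 hρ.le
      have h1 := abs_le.mp (hbd1 t)
      have h2 := abs_le.mp (hbd2 t)
      nlinarith [h1.1, h1.2, h2.2, hM0]
    have hE2 : 2 * αb * deriv φ t * ρ ^ (αb - 1) ≤ (2 * |αb| * M) * ρ ^ αb := by
      have h1 : 2 * αb * deriv φ t ≤ 2 * |αb| * M := by
        calc 2 * αb * deriv φ t ≤ |2 * αb * deriv φ t| := le_abs_self _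
        _ = 2 * |αb| * |deriv φ t| := by rw [abs_mul, abs_mul]; simp [abs_of_nonneg]
        _ ≤ 2 * |αb| * M := by
            apply mul_le_mul_of_nonneg_left (hbd1 t); positivity
      have h2 : ρ ^ (αb - 1) ≤ ρ ^ αb := rpow_le_rpow_of_exponent_le hρ1 (by linarith)
      calc 2 * αb * deriv φ t * ρ ^ (αb - 1) ≤ (2 * |αb| * M) * ρ ^ (αb - 1) := by
            apply mul_le_mul_of_nonneg_right h1 (hρpow _).le
        _ ≤ (2 * |αb| * M) * ρ ^ αb := by
            apply mul_le_mul_of_nonneg_left h2; positivity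
    -- gain from ε
    have hgain : (C + 1) * ρ ^ αb ≤ lam * ρ ^ (αo - 2) := by
      have hbase : (0:ℝ) ≤ (C + 1) / lam := by positivity
      have hρε : (C + 1) / lam ≤ ρ ^ ε := by
        calc (C + 1) / lam = (((C + 1) / lam) ^ (1 / ε)) ^ ε := by
              rw [← Real.rpow_mul hbase, one_div_mul_cancel hε.ne', Real.rpow_one]
          _ ≤ ρ ^ ε := by
              apply Real.rpow_le_rpow (Real.rpow_nonneg hbase _)
                (le_trans (le_max_right _ _) hDD) hε.le
      have h1 : ρ ^ (αo - 2) = ρ ^ ε * ρ ^ αb := by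
        rw [← Real.rpow_add hρ, hεdef]; ring_nf
      rw [h1]
      have h2 : C + 1 ≤ lam * ρ ^ ε := by
        rw [div_le_iff₀ hlam] at hρε; linarith [hρε]
      calc (C + 1) * ρ ^ αb ≤ (lam * ρ ^ ε) * ρ ^ αb :=
            mul_le_mul_of_nonneg_right h2 (hρpow αb).le
        _ = lam * (ρ ^ ε * ρ ^ αb) := by ring
    have hsplit : (C + 1) * ρ ^ αb
        = ((k:ℝ) * M) * ρ ^ αb + (2 * |αb| * M) * ρ ^ αb + ρ ^ αb := by
      rw [hCdef]; ring
    have := hρpow αb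
    linarith
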